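/- arXiv:2512.02808 — 3 statements merged into one kernel-verified Lean document; each statement's English description precedes it below -/
import Mathlib

section
/- (Soundness of the two-prover oracle-transcript game) Fix a finite index set of oracle queries {1,…,k}, formulas φ : Fin k → (W → Prop) (each query's satisfaction relation over witnesses W), an acceptance predicate Acc : (Fin k → Bool) → Prop on oracle-answer vectors, and the 'correct answers' a* : Fin k → Bool defined by a* i = true ↔ ∃ w, φ i w. Define Q(Y, Z) where Y = (a : Fin k → Bool, wit : ∀ i, a i = true → W) and Z = (j : Fin k, w' : W), by: Q holds iff Acc a, and for every i with a i = true, φ i (wit i _), and (a j = false → ¬ φ j w'). Then: if there exists Y such that Q(Y, Z) holds for all Z, then the answer vector a in any such Y equals the correct answers a* and Acc a* holds. -/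
theorem oracle_game_soundness {k : ℕ} {W : Type*} [Nonempty W] (hk : 0 < k)
    (φ : Fin k → W → Prop) (Acc : (Fin k → Bool) → Prop)
    (astar : Fin k → Bool) (hastar : ∀ i, astar i = true ↔ ∃ w, φ i w)
    (Q : ((a : Fin k → Bool) × (∀ i, a i = true → W)) → (Fin k × W) → Prop)
    (hQ : ∀ Y Z, Q Y Z ↔
      Acc Y.1 ∧ (∀ i (h : Y.1 i = true), φ i (Y.2 i h)) ∧
        (Y.1 Z.1 = false → ¬ φ Z.1 Z.2))
    (hwin : ∃ Y, ∀ Z, Q Y Z) :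
    ∀ Y, (∀ Z, Q Y Z) → Y.1 = astar ∧ Acc astar := by
  intro Y hY
  have heq : Y.1 = astar := by
    funext i
    rcases h : Y.1 i with _ | _
    · have : ¬ ∃ w, φ i w := by
        rintro ⟨w, hw⟩
        exact ((hQ Y (i, w)).mp (hY (i, w))).2.2 h hw
      have h2 := (hastar i).not.mpr this
      exact (Bool.not_eq_true _).mp h2 |>.symm
    · have := ((hQ Y (i, Classical.arbitrary W)).mp (hY _)).2.1 i h
      exact ((hastar i).mpr ⟨_, this⟩).symm
  have hacc := ((hQ Y (⟨0, hk⟩, Classical.arbitrary W)).mp (hY _)).1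
  exact ⟨heq, heq ▸ hacc⟩
end

section
/- (The constructed game predicate satisfies the S₂ condition when the underlying relation is total) With φ, Acc, a*, Q as in the oracle-transcript game, assume Acc a* holds (totality of the underlying TFNP^NP relation on this input). Then the game Q satisfies the first S₂ alternative: ∃ Y, ∀ Z, Q(Y, Z); and in particular Q satisfies the S₂ condition (∃ Y, ∀ Z, Q(Y,Z)) ∨ (∃ Z, ∀ Y, ¬Q(Y,Z)). -/
theorem oracle_game_s2 {k : ℕ} {W : Type*}
    (φ : Fin k → W → Prop) (Acc : (Fin k → Bool) → Prop)
    (astar : Fin k → Bool) (hastar : ∀ i, astar i = true ↔ ∃ w, φ i w)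
    (Q : ((a : Fin k → Bool) × (∀ i, a i = true → W)) → (Fin k × W) → Prop)
    (hQ : ∀ Y Z, Q Y Z ↔
      Acc Y.1 ∧ (∀ i (h : Y.1 i = true), φ i (Y.2 i h)) ∧
        (Y.1 Z.1 = false → ¬ φ Z.1 Z.2))
    (hAcc : Acc astar) :
    (∃ Y, ∀ Z, Q Y Z) ∧ ((∃ Y, ∀ Z, Q Y Z) ∨ (∃ Z, ∀ Y, ¬ Q Y Z)) := by
  have h : ∃ Y, ∀ Z, Q Y Z := by
    refine ⟨⟨astar, fun i h => ((hastar i).mp h).choose⟩, fun Z => ?_⟩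
    rw [hQ]
    refine ⟨hAcc, fun i h => ((hastar i).mp h).choose_spec, fun hf hφ => ?_⟩
    have := (hastar Z.1).mpr ⟨Z.2, hφ⟩
    rw [show (⟨astar, fun i h => ((hastar i).mp h).choose⟩ : (a : Fin k → Bool) × (∀ i, a i = true → W)).fst = astar from rfl, this] at hf; exact Bool.noConfusion hf
  exact ⟨h, Or.inl h⟩
end

section
/- (Reduction preserves solutions) Consider a total relation R : X → Y → Prop where for each x the membership R x y is characterized via the oracle-transcript machinery: there are φₓ : Fin k → (W → Prop) and Accₓ,ᵧ : (Fin k → Bool) → Prop such that R x y ↔ Accₓ,ᵧ a*ₓ where a*ₓ i = true ↔ ∃ w, φₓ i w. Then any winning Player-1 strategy in the game Qₓ (whose first component includes a candidate y, answers a, and witnesses wit) yields y with R x y. -/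
theorem reduction_preserves_solutions {X Y W : Type*} [Nonempty W] {k : ℕ} (hk : 0 < k)
    (R : X → Y → Prop) (hR : ∀ x, ∃ y, R x y)
    (φ : X → Fin k → W → Prop) (Acc : X → Y → (Fin k → Bool) → Prop)
    (astar : X → Fin k → Bool)
    (hastar : ∀ x i, astar x i = true ↔ ∃ w, φ x i w)
    (hchar : ∀ x y, R x y ↔ Acc x y (astar x))
    (Q : X → (Y × (a : Fin k → Bool) × (∀ i, a i = true → W)) → (Fin k × W) → Prop)
    (hQ : ∀ x P1 Z, Q x P1 Z ↔
      Acc x P1.1 P1.2.1 ∧ (∀ i (h : P1.2.1 i = true), φ x i (P1.2.2 i h)) ∧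
        (P1.2.1 Z.1 = false → ¬ φ x Z.1 Z.2)) :
    ∀ x P1, (∀ Z, Q x P1 Z) → R x P1.1 := by
  intro x ⟨y, a, wit⟩ hwin
  obtain ⟨w⟩ := ‹Nonempty W›
  have key : a = astar x := by
    funext i
    rcases Bool.eq_false_or_eq_true (a i) with hi | hi
    · have : astar x i = true := by
        rw [hastar]
        exact ⟨wit i hi, ((hQ x ⟨y, a, wit⟩ (i, w)).1 (hwin (i, w))).2.1 i hi⟩
      rw [hi, this]
    · have : astar x i = false := by
        rw [← Bool.not_eq_true, hastar]
        rintro ⟨w', hw⟩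
        exact (((hQ x ⟨y, a, wit⟩ (i, w')).1 (hwin (i, w'))).2.2 hi) hw
      rw [hi, this]
  have hAcc := ((hQ x ⟨y, a, wit⟩ (⟨0, hk⟩, w)).1 (hwin _)).1
  rw [hchar]
  simpa [key] using hAcc
end
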